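/- arXiv:1410.6179 — 2 statements merged into one kernel-verified Lean document; each statement's English description precedes it below -/
import Mathlib

section
/- Let p be a prime, 0 ≤ n < m, k ≥ 1, and let χ1,…,χk be characters mod p^m, at least one of which is primitive mod p^m. Suppose χ1⋯χk is induced by a primitive character ψ mod p^{m−n}. Then J_{p^n}(χ1,…,χk,p^m) = (∏_{i=1}^{k} G(χ_i, p^m)) / G(ψ, p^{m−n}). -/
open Complex

/-- The generalized Jacobi sum `J_B(χ₁,…,χ_k, q)`. -/
noncomputable def Jsum {q : ℕ} [NeZero q] {k : ℕ}
    (χ : Fin k → DirichletCharacter ℂ q) (B : ZMod q) : ℂ :=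
  ∑ x : Fin k → ZMod q, if (∑ i, x i) = B then ∏ i, χ i (x i) else 0

/-- The Gauss sum `G(χ,q) = ∑_{x mod q} χ(x) e^{2πi x/q}`. -/
noncomputable def Gsum {q : ℕ} [NeZero q] (χ : DirichletCharacter ℂ q) : ℂ :=
  ∑ x : ZMod q, χ x * Complex.exp (2 * Real.pi * Complex.I * (x.val : ℂ) / q)

open Finset AddChar DirichletCharacter

section Aux

lemma stmt15_stdAddChar_eq_exp {q : ℕ} [NeZero q] (x : ZMod q) :
    ZMod.stdAddChar x = Complex.exp (2 * Real.pi * Complex.I * (x.val : ℂ) / q) := by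
  conv_lhs => rw [show x = ((x.val : ℤ) : ZMod q) by simp]
  rw [ZMod.stdAddChar_coe]
  norm_num

lemma stmt15_Gsum_eq {q : ℕ} [NeZero q] (χ : DirichletCharacter ℂ q) :
    Gsum χ = gaussSum χ ZMod.stdAddChar := by
  unfold Gsum gaussSum
  exact Finset.sum_congr rfl fun x _ => by rw [stmt15_stdAddChar_eq_exp]

lemma stmt15_mulchar_prod_apply {k : ℕ} {q : ℕ} [NeZero q]
    (χ : Fin k → DirichletCharacter ℂ q)
    {t : ZMod q} (ht : IsUnit t) : (∏ i, χ i) t = ∏ i, χ i t := by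
  induction k with
  | zero => simpa using MulChar.one_apply_coe ht.unit
  | succ k ih =>
      rw [Fin.prod_univ_succ, Fin.prod_univ_succ, MulChar.mul_apply, ih]

lemma stmt15_gaussSum_mulShift_unit {q : ℕ} [NeZero q] (χ : DirichletCharacter ℂ q)
    (e : AddChar (ZMod q) ℂ) (u : (ZMod q)ˣ) :
    gaussSum χ (e.mulShift u) = χ⁻¹ u * gaussSum χ e := by
  conv_rhs => rw [← gaussSum_mulShift χ e u]
  rw [MulChar.inv_apply_eq_inv, Ring.inverse_mul_cancel_left _ _ ((u.isUnit).map χ)]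

lemma stmt15_factorsThrough_inv {n d : ℕ} (χ : DirichletCharacter ℂ n)
    (h : FactorsThrough χ d) : FactorsThrough χ⁻¹ d := by
  obtain ⟨hd, χ₀, hχ₀⟩ := h
  exact ⟨hd, χ₀⁻¹, by rw [map_inv, ← hχ₀]⟩

lemma stmt15_isPrimitive_inv {n : ℕ} {χ : DirichletCharacter ℂ n} (h : IsPrimitive χ) :
    IsPrimitive χ⁻¹ := by
  have hset : conductorSet χ⁻¹ = conductorSet χ := by
    ext d
    exact ⟨fun hd => inv_inv χ ▸ stmt15_factorsThrough_inv χ⁻¹ hd,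
      fun hd => stmt15_factorsThrough_inv χ hd⟩
  rw [DirichletCharacter.IsPrimitive, DirichletCharacter.conductor, hset]
  exact h

lemma stmt15_sum_castHom {q Q : ℕ} [NeZero q] [NeZero Q] (h : Q ∣ q) (f : ZMod Q → ℂ) :
    ∑ t : ZMod q, f (ZMod.castHom h (ZMod Q) t) = ((q / Q : ℕ) : ℂ) * ∑ s : ZMod Q, f s := by
  classical
  set π := ZMod.castHom h (ZMod Q)
  have hsurj : Function.Surjective π := by
    intro s
    exact ⟨(s.val : ZMod q), by rw [map_natCast, ZMod.natCast_val, ZMod.cast_id]⟩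
  have himg : (univ : Finset (ZMod q)).image π = univ :=
    Finset.image_univ_of_surjective hsurj
  have hcard : ∀ s : ZMod Q, #(univ.filter fun t => π t = s) = q / Q := by
    have hc0 : ∀ s : ZMod Q, #(univ.filter fun t => π t = s)
        = #(univ.filter fun t => π t = 0) := fun s =>
      AddMonoidHom.card_fiber_eq_of_mem_range π (hsurj s) (hsurj 0)
    have htot : Fintype.card (ZMod q) = ∑ s : ZMod Q, #(univ.filter fun t => π t = s) :=
      Finset.card_eq_sum_card_fiberwise (fun x _ => mem_univ _)
    have hthis : q = Q * #(univ.filter fun t => π t = 0) := by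
      have h2 := htot
      rw [ZMod.card] at h2
      conv_lhs => rw [h2]
      simp [hc0, Finset.card_univ, ZMod.card, mul_comm]
    intro s
    rw [hc0 s]
    exact (Nat.div_eq_of_eq_mul_left (Nat.pos_of_ne_zero (NeZero.ne Q))
      (hthis.trans (Nat.mul_comm Q _))).symm
  rw [Finset.sum_comp f π, himg, Finset.mul_sum]
  exact Finset.sum_congr rfl fun s _ => by rw [hcard s]; simp [nsmul_eq_mul]

lemma stmt15_isUnit_of_cast_isUnit {p a b : ℕ} (ha : 0 < a) (hb : 0 < b)
    (hab : b ≤ a) (t : ZMod (p ^ a)) [NeZero (p ^ a)] [NeZero (p ^ b)]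
    (h : IsUnit (ZMod.castHom (pow_dvd_pow p hab) (ZMod (p ^ b)) t)) : IsUnit t := by
  have h1 : ZMod.castHom (pow_dvd_pow p hab) (ZMod (p ^ b)) t = ((t.val : ℕ) : ZMod (p ^ b)) := by
    rw [ZMod.natCast_val, ZMod.castHom_apply]
  have h2 : Nat.Coprime t.val (p ^ b) := by
    rw [← ZMod.isUnit_iff_coprime, ← h1]; exact h
  have h3 : Nat.Coprime t.val (p ^ a) := by
    rw [Nat.coprime_pow_right_iff ha]
    rw [Nat.coprime_pow_right_iff hb] at h2
    exact h2
  have h4 : IsUnit ((t.val : ℕ) : ZMod (p ^ a)) := (ZMod.isUnit_iff_coprime _ _).mpr h3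
  rwa [ZMod.natCast_val, ZMod.cast_id] at h4

lemma stmt15_changeLevel_apply_cast {p a b : ℕ} (ha : 0 < a) (hb : 0 < b)
    (hab : b ≤ a) [NeZero (p ^ a)] [NeZero (p ^ b)]
    (ψ : DirichletCharacter ℂ (p ^ b)) (t : ZMod (p ^ a)) :
    (changeLevel (pow_dvd_pow p hab) ψ) t
      = ψ (ZMod.castHom (pow_dvd_pow p hab) (ZMod (p ^ b)) t) := by
  by_cases ht : IsUnit t
  · have h1 := changeLevel_eq_cast_of_dvd ψ (pow_dvd_pow p hab) ht.unit
    rw [IsUnit.unit_spec] at h1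
    rw [h1, ZMod.castHom_apply]
  · rw [MulChar.map_nonunit _ ht, MulChar.map_nonunit]
    intro hu
    exact ht (stmt15_isUnit_of_cast_isUnit ha hb hab t hu)

lemma stmt15_stdAddChar_mul_cast {q Q c : ℕ} [NeZero q] [NeZero Q] (h : Q ∣ q)
    (hc : q = c * Q) (t : ZMod q) :
    ZMod.stdAddChar (t * (c : ZMod q))
      = ZMod.stdAddChar (ZMod.castHom h (ZMod Q) t) := by
  have h1 : t * (c : ZMod q) = (((t.val * c : ℕ) : ℤ) : ZMod q) := by
    push_cast
    rw [ZMod.natCast_val, ZMod.cast_id]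
  have h2 : ZMod.castHom h (ZMod Q) t = (((t.val : ℕ) : ℤ) : ZMod Q) := by
    push_cast
    rw [ZMod.natCast_val, ZMod.castHom_apply]
  rw [h1, h2, ZMod.stdAddChar_coe, ZMod.stdAddChar_coe]
  congr 1
  have hq : (q : ℂ) ≠ 0 := Nat.cast_ne_zero.mpr (NeZero.ne q)
  have hQ : (Q : ℂ) ≠ 0 := Nat.cast_ne_zero.mpr (NeZero.ne Q)
  have hqc : (q : ℂ) = (c : ℂ) * Q := by exact_mod_cast congrArg (Nat.cast : ℕ → ℂ) hc
  have hcc : (c : ℂ) ≠ 0 := by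
    intro h0
    rw [h0, zero_mul] at hqc
    exact hq hqc
  field_simp [hqc]
  rw [hqc]; push_cast; ring

lemma stmt15_addchar_map_sum {A M : Type*} [AddCommMonoid A] [CommMonoid M]
    (e : AddChar A M) {ι : Type*} (s : Finset ι) (f : ι → A) :
    e (∑ i ∈ s, f i) = ∏ i ∈ s, e (f i) := by
  classical
  induction s using Finset.cons_induction with
  | empty => simp
  | cons a s ha ih => rw [Finset.sum_cons, Finset.prod_cons, map_add_eq_mul, ih]

lemma stmt15_key1 {q k : ℕ} [NeZero q] (χ : Fin (k + 1) → DirichletCharacter ℂ q)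
    (B : ZMod q) :
    ∑ t : ZMod q, ZMod.stdAddChar (-(t * B))
      * ∏ i, gaussSum (χ i) (ZMod.stdAddChar.mulShift t)
    = (q : ℂ) * Jsum χ B := by
  classical
  set e : AddChar (ZMod q) ℂ := ZMod.stdAddChar with he
  have hprod : ∀ t : ZMod q, ∏ i, gaussSum (χ i) (e.mulShift t)
      = ∑ x : Fin (k + 1) → ZMod q, (∏ i, χ i (x i)) * e (t * ∑ i, x i) := by
    intro t
    unfold gaussSum
    rw [Finset.prod_univ_sum (fun _ => (univ : Finset (ZMod q))) _]
    rw [Fintype.piFinset_univ]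
    refine Finset.sum_congr rfl fun x _ => ?_
    rw [Finset.prod_mul_distrib]
    congr 1
    rw [Finset.mul_sum, stmt15_addchar_map_sum]
    exact Finset.prod_congr rfl fun i _ => by rw [mulShift_apply]
  calc ∑ t : ZMod q, e (-(t * B)) * ∏ i, gaussSum (χ i) (e.mulShift t)
      = ∑ t : ZMod q, ∑ x : Fin (k + 1) → ZMod q,
          (∏ i, χ i (x i)) * e (t * ((∑ i, x i) - B)) := by
        refine Finset.sum_congr rfl fun t _ => ?_
        rw [hprod t, Finset.mul_sum]
        refine Finset.sum_congr rfl fun x _ => ?_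
        rw [show t * ((∑ i, x i) - B) = t * (∑ i, x i) + -(t * B) by ring,
          map_add_eq_mul]
        ring
    _ = ∑ x : Fin (k + 1) → ZMod q, (∏ i, χ i (x i))
          * ∑ t : ZMod q, e (t * ((∑ i, x i) - B)) := by
        rw [Finset.sum_comm]
        exact Finset.sum_congr rfl fun x _ => by rw [Finset.mul_sum]
    _ = (q : ℂ) * Jsum χ B := by
        unfold Jsum
        rw [Finset.mul_sum]
        refine Finset.sum_congr rfl fun x _ => ?_
        rw [he, AddChar.sum_mulShift _ (ZMod.isPrimitive_stdAddChar q)]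
        by_cases hx : (∑ i, x i) = B
        · rw [if_pos hx, if_pos (by rw [hx, sub_self]), ZMod.card]
          push_cast; ring
        · rw [if_neg hx, if_neg (fun hc => hx (sub_eq_zero.mp hc))]
          push_cast; ring

lemma stmt15_key2 {q k : ℕ} [NeZero q] (χ : Fin (k + 1) → DirichletCharacter ℂ q)
    (hex : ∃ i, (χ i).IsPrimitive) (t : ZMod q) :
    ∏ i, gaussSum (χ i) (ZMod.stdAddChar.mulShift t)
      = (∏ i, χ i)⁻¹ t * ∏ i, gaussSum (χ i) ZMod.stdAddChar := by
  by_cases ht : IsUnit t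
  · have h1 : ∀ i : Fin (k + 1), gaussSum (χ i) (ZMod.stdAddChar.mulShift t)
        = (χ i)⁻¹ t * gaussSum (χ i) ZMod.stdAddChar := by
      intro i
      have h2 := stmt15_gaussSum_mulShift_unit (χ i) ZMod.stdAddChar ht.unit
      rwa [IsUnit.unit_spec] at h2
    rw [Finset.prod_congr rfl fun i _ => h1 i, Finset.prod_mul_distrib]
    congr 1
    rw [← stmt15_mulchar_prod_apply (fun i => (χ i)⁻¹) ht, Finset.prod_inv_distrib]
  · obtain ⟨j, hj⟩ := hex
    rw [Finset.prod_eq_zero (mem_univ j)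
      (gaussSum_eq_zero_of_isPrimitive_of_not_isPrimitive _ hj
        (not_isPrimitive_mulShift _ ht)),
      MulChar.map_nonunit _ ht, zero_mul]

lemma stmt15_key7 {Q : ℕ} [NeZero Q] {ψ : DirichletCharacter ℂ Q} (hψ : ψ.IsPrimitive) :
    gaussSum ψ ZMod.stdAddChar * gaussSum ψ⁻¹ (ZMod.stdAddChar.mulShift (-1)) = (Q : ℂ) := by
  have hinv : IsPrimitive ψ⁻¹ := stmt15_isPrimitive_inv hψ
  set g : ℂ := gaussSum ψ ZMod.stdAddChar with hg
  set g' : ℂ := gaussSum ψ⁻¹ ZMod.stdAddChar with hg'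
  have hdd := congrFun (ZMod.dft_dft (⇑ψ : ZMod Q → ℂ)) (-1)
  have hstep : ZMod.dft (⇑ψ) = fun k => (fun j => ψ⁻¹ (-j)) k * g :=
    funext fun k => hψ.fourierTransform_eq_inv_mul_gaussSum k
  rw [hstep, ZMod.dft_mul_const (fun j => ψ⁻¹ (-j)) g] at hdd
  have hneg : ZMod.dft (fun j => ψ⁻¹ (-j)) = fun k => ZMod.dft (⇑ψ⁻¹) (-k) :=
    ZMod.dft_comp_neg (⇑ψ⁻¹)
  rw [hneg] at hdd
  simp only [neg_neg] at hdd
  rw [hinv.fourierTransform_eq_inv_mul_gaussSum 1] at hdd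
  have hψ1 : ψ (1 : ZMod Q) = 1 := map_one ψ
  rw [inv_inv, hψ1] at hdd
  have hms : gaussSum ψ⁻¹ (ZMod.stdAddChar.mulShift (-1)) = ψ (-1) * g' := by
    have h3 := stmt15_gaussSum_mulShift_unit ψ⁻¹ ZMod.stdAddChar (-1)
    rw [inv_inv, Units.coe_neg_one] at h3
    exact h3
  rw [hms, ← mul_assoc, mul_comm g (ψ (-1)), mul_assoc]
  rw [mul_comm g g', ← mul_assoc]
  simpa [smul_eq_mul] using hdd

end Aux

/-- Here the `k+1 ≥ 1` characters are `χ 0, …, χ (Fin.last k)`, at least one of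
which is primitive. -/
theorem stmt15 {p m n k : ℕ} [NeZero (p ^ m)] [NeZero (p ^ (m - n))]
    (hp : p.Prime) (hnm : n < m)
    (χ : Fin (k + 1) → DirichletCharacter ℂ (p ^ m))
    (hex : ∃ i, (χ i).IsPrimitive)
    -- χ₁⋯χ_k is induced by a primitive character ψ mod p^(m-n)
    (ψ : DirichletCharacter ℂ (p ^ (m - n))) (hψ : ψ.IsPrimitive)
    (hind : ∏ i, χ i = DirichletCharacter.changeLevel
      (pow_dvd_pow p (Nat.sub_le m n)) ψ) :
    Jsum χ ((p ^ n : ℕ) : ZMod (p ^ m)) = (∏ i, Gsum (χ i)) / Gsum ψ := by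
  classical
  have hm : 0 < m := lt_of_le_of_lt (Nat.zero_le n) hnm
  have hmn : 0 < m - n := Nat.sub_pos_of_lt hnm
  have hdvd : p ^ (m - n) ∣ p ^ m := pow_dvd_pow p (Nat.sub_le m n)
  have hc : p ^ m = p ^ n * p ^ (m - n) := by
    rw [← pow_add]
    congr 1
    omega
  set π := ZMod.castHom hdvd (ZMod (p ^ (m - n))) with hπ
  set B : ZMod (p ^ m) := ((p ^ n : ℕ) : ZMod (p ^ m)) with hB
  set e : AddChar (ZMod (p ^ m)) ℂ := ZMod.stdAddChar with he
  set eQ : AddChar (ZMod (p ^ (m - n))) ℂ := ZMod.stdAddChar with heQ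
  set g : ℂ := gaussSum ψ ZMod.stdAddChar with hg
  set G : ℂ := ∏ i, gaussSum (χ i) ZMod.stdAddChar with hG
  -- the inverse of the product character, pointwise
  have hinds : ∀ t : ZMod (p ^ m), (∏ i, χ i)⁻¹ t = ψ⁻¹ (π t) := by
    intro t
    rw [hind, ← map_inv (changeLevel (pow_dvd_pow p (Nat.sub_le m n))) ψ]
    exact stmt15_changeLevel_apply_cast hm hmn (Nat.sub_le m n) ψ⁻¹ t
  -- main sum computation
  have hmain : ((p ^ m : ℕ) : ℂ) * Jsum χ B
      = (p ^ n : ℕ) * gaussSum ψ⁻¹ (eQ.mulShift (-1)) * G := by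
    rw [← stmt15_key1 χ B]
    calc ∑ t : ZMod (p ^ m), e (-(t * B)) * ∏ i, gaussSum (χ i) (e.mulShift t)
        = ∑ t : ZMod (p ^ m), (ψ⁻¹ (π t) * eQ (-(π t))) * G := by
          refine Finset.sum_congr rfl fun t _ => ?_
          rw [stmt15_key2 χ hex t, hinds t]
          have hcast : e (-(t * B)) = eQ (-(π t)) := by
            have h4 := stmt15_stdAddChar_mul_cast hdvd hc (-t)
            rw [map_neg] at h4
            rw [show -(t * B) = -t * ((p ^ n : ℕ) : ZMod (p ^ m)) by rw [hB]; ring]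
            exact h4
          rw [hcast, ← hG]
          ring
      _ = (((p ^ m / p ^ (m - n) : ℕ)) : ℂ) * (∑ s : ZMod (p ^ (m - n)), ψ⁻¹ s * eQ (-s)) * G := by
          rw [← Finset.sum_mul]
          congr 1
          exact stmt15_sum_castHom hdvd (fun s => ψ⁻¹ s * eQ (-s))
      _ = (p ^ n : ℕ) * gaussSum ψ⁻¹ (eQ.mulShift (-1)) * G := by
          congr 2
          · congr 1
            rw [hc, Nat.mul_comm, Nat.mul_div_cancel_left _
              (Nat.pos_of_ne_zero (NeZero.ne (p ^ (m - n))))]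
          · unfold gaussSum
            exact Finset.sum_congr rfl fun s _ => by rw [mulShift_apply, neg_one_mul]
  have hk7 : g * gaussSum ψ⁻¹ (eQ.mulShift (-1)) = ((p ^ (m - n) : ℕ) : ℂ) := stmt15_key7 hψ
  have hQ0 : ((p ^ (m - n) : ℕ) : ℂ) ≠ 0 := Nat.cast_ne_zero.mpr (NeZero.ne _)
  have hq0 : ((p ^ m : ℕ) : ℂ) ≠ 0 := Nat.cast_ne_zero.mpr (NeZero.ne _)
  have hg0 : g ≠ 0 := by
    intro h0
    rw [h0, zero_mul] at hk7
    exact hQ0 hk7.symm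
  rw [show (∏ i, Gsum (χ i)) = G by rw [hG]; exact Finset.prod_congr rfl fun i _ => stmt15_Gsum_eq _,
    show Gsum ψ = g by rw [hg]; exact stmt15_Gsum_eq ψ]
  rw [eq_div_iff hg0]
  apply mul_left_cancel₀ hq0
  calc ((p ^ m : ℕ) : ℂ) * (Jsum χ B * g) = (((p ^ m : ℕ) : ℂ) * Jsum χ B) * g := by ring
    _ = (p ^ n : ℕ) * gaussSum ψ⁻¹ (eQ.mulShift (-1)) * G * g := by rw [hmain]
    _ = (p ^ n : ℕ) * (g * gaussSum ψ⁻¹ (eQ.mulShift (-1))) * G := by ring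
    _ = (p ^ n : ℕ) * ((p ^ (m - n) : ℕ) : ℂ) * G := by rw [hk7]
    _ = ((p ^ m : ℕ) : ℂ) * G := by
        rw [show ((p ^ n : ℕ) : ℂ) * ((p ^ (m - n) : ℕ) : ℂ)
          = ((p ^ n * p ^ (m - n) : ℕ) : ℂ) by push_cast; ring, ← hc]
end

section
/- Let p be a prime, m ≥ 1, n = m − 1, and k ≥ 1. Let χ1,…,χk be primitive characters mod p^m and suppose χ1⋯χk is induced by a character ψ mod p. Then |J_{p^{m−1}}(χ1,…,χk,p^m)| = p^{mk/2 − 1} if ψ is the principal character mod p, and |J_{p^{m−1}}(χ1,…,χk,p^m)| = p^{(mk−1)/2} otherwise. -/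
open Complex

namespace Stmt16Aux

open Finset AddChar DirichletCharacter

private lemma geom_aux {ζ : ℂ} {d : ℕ} (hζ : ζ ^ d = 1) :
    ∑ t ∈ Finset.range d, ζ ^ t = if ζ = 1 then (d : ℂ) else 0 := by
  split_ifs with h
  · simp [h]
  · rw [geom_sum_eq h, hζ, sub_self, zero_div]

private lemma pow_one_add {R : Type*} [CommRing R] {c : R} (hc : c ^ 2 = 0) (t : ℕ) :
    (1 + c) ^ t = 1 + (t : R) * c := by
  induction t with
  | zero => simp
  | succ n ih =>
    rw [pow_succ, ih]
    push_cast
    linear_combination (n : R) * hc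

private lemma map_sum_eq_prod {A : Type*} [AddCommMonoid A] (ψ : AddChar A ℂ) {ι : Type*}
    (s : Finset ι) (f : ι → A) : ψ (∑ i ∈ s, f i) = ∏ i ∈ s, ψ (f i) := by
  classical
  induction s using Finset.induction_on with
  | empty => simp
  | insert _ _ h ih => rw [Finset.sum_insert h, Finset.prod_insert h, map_add_eq_mul, ih]

private lemma mulchar_prod_apply {n : ℕ} {ι : Type*} (s : Finset ι) (hs : s.Nonempty)
    (χ : ι → DirichletCharacter ℂ n) (t : ZMod n) :
    (∏ i ∈ s, χ i) t = ∏ i ∈ s, χ i t := by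
  induction hs using Finset.Nonempty.cons_induction with
  | singleton a => simp
  | cons a s ha hs ih =>
    rw [Finset.prod_cons, Finset.prod_cons, MulChar.coeToFun_mul, Pi.mul_apply, ih]

private lemma sqrt_pow_nat {x : ℝ} (hx : 0 ≤ x) (n : ℕ) :
    Real.sqrt (x ^ n) = Real.sqrt x ^ n := by
  have h : x ^ n = (Real.sqrt x ^ n) ^ 2 := by
    rw [← pow_mul, mul_comm n 2, pow_mul, Real.sq_sqrt hx]
  rw [h, Real.sqrt_sq (pow_nonneg (Real.sqrt_nonneg x) n)]

variable {p m : ℕ}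

private lemma cast_val_eq {n : ℕ} [NeZero n] (y : ZMod n) : ((y.val : ℕ) : ZMod n) = y := by
  simp [ZMod.natCast_val, ZMod.cast_id]

private lemma hpm (hm : 1 ≤ m) : p ^ m = p ^ (m - 1) * p := by
  rw [← pow_succ]; congr 1; omega

private lemma cast_mul_eq_zero_iff [NeZero (p ^ m)] (hp : p.Prime) {a b : ℕ} (hab : a + b = m)
    (x : ZMod (p ^ m)) :
    ((p ^ b : ℕ) : ZMod (p ^ m)) * x = 0 ↔ p ^ a ∣ x.val := by
  conv_lhs => rw [← cast_val_eq x]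
  rw [← Nat.cast_mul, ZMod.natCast_eq_zero_iff]
  have hba : p ^ b * p ^ a = p ^ m := by rw [← pow_add]; congr 1; omega
  constructor
  · intro h
    have h2 : p ^ b * p ^ a ∣ p ^ b * x.val := by rwa [hba]
    exact (Nat.mul_dvd_mul_iff_left (pow_pos hp.pos b)).mp h2
  · rintro ⟨t, ht⟩
    exact ⟨t, by rw [ht, ← mul_assoc, hba]⟩

private lemma sdiff_units_eq [NeZero (p ^ m)] (hp : p.Prime) (hm : 1 ≤ m) :
    (univ \ univ.image (fun u : (ZMod (p ^ m))ˣ => (u : ZMod (p ^ m))))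
      = (range (p ^ (m - 1))).image (fun t => ((p * t : ℕ) : ZMod (p ^ m))) := by
  ext y
  simp only [mem_sdiff, mem_univ, true_and, mem_image, mem_range]
  have himg : (∃ u : (ZMod (p ^ m))ˣ, (u : ZMod (p ^ m)) = y) ↔ IsUnit y := Iff.rfl
  rw [himg]
  constructor
  · intro hy
    have h1 : p ∣ y.val := by
      by_contra hnd
      apply hy
      have hc : Nat.Coprime y.val (p ^ m) :=
        Nat.Coprime.pow_right m ((Nat.Prime.coprime_iff_not_dvd hp).mpr hnd).symm
      have := (ZMod.isUnit_iff_coprime y.val (p ^ m)).mpr hc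
      rwa [cast_val_eq] at this
    obtain ⟨t, ht⟩ := h1
    refine ⟨t, ?_, ?_⟩
    · have h2 : y.val < p ^ m := ZMod.val_lt y
      rw [ht, hpm hm, mul_comm (p ^ (m - 1)) p] at h2
      exact Nat.lt_of_mul_lt_mul_left h2
    · rw [← ht, cast_val_eq]
  · rintro ⟨t, ht, rfl⟩ hu
    rw [ZMod.isUnit_iff_coprime, Nat.coprime_iff_gcd_eq_one] at hu
    have h1 : p ∣ Nat.gcd (p * t) (p ^ m) :=
      Nat.dvd_gcd ⟨t, rfl⟩ (dvd_pow_self p (by omega))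
    rw [hu] at h1
    exact hp.ne_one (Nat.dvd_one.mp h1)

private lemma sum_nonunits [NeZero (p ^ m)] (hp : p.Prime) (hm : 1 ≤ m) (f : ZMod (p ^ m) → ℂ) :
    ∑ y ∈ univ \ univ.image (fun u : (ZMod (p ^ m))ˣ => (u : ZMod (p ^ m))), f y
      = ∑ t ∈ range (p ^ (m - 1)), f ((p * t : ℕ)) := by
  rw [sdiff_units_eq hp hm, sum_image]
  intro t₁ h₁ t₂ h₂ h
  simp only [mem_coe, mem_range] at h₁ h₂
  have l₁ : p * t₁ < p ^ m := by
    rw [hpm hm, mul_comm (p ^ (m - 1)) p]; exact mul_lt_mul_of_pos_left h₁ hp.pos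
  have l₂ : p * t₂ < p ^ m := by
    rw [hpm hm, mul_comm (p ^ (m - 1)) p]; exact mul_lt_mul_of_pos_left h₂ hp.pos
  have := congrArg ZMod.val h
  rw [ZMod.val_cast_of_lt l₁, ZMod.val_cast_of_lt l₂] at this
  exact Nat.eq_of_mul_eq_mul_left hp.pos this

private lemma filter_cong_eq [NeZero (p ^ m)] (hp : p.Prime) {a b : ℕ} (hab : a + b = m) :
    univ.filter (fun v : ZMod (p ^ m) => ((p ^ b : ℕ) : ZMod (p ^ m)) * (v - 1) = 0)
      = (range (p ^ b)).image (fun t => ((1 + p ^ a * t : ℕ) : ZMod (p ^ m))) := by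
  ext v
  simp only [mem_filter, mem_univ, true_and, mem_image, mem_range]
  rw [cast_mul_eq_zero_iff hp hab]
  constructor
  · rintro ⟨t, ht⟩
    have hlt : (v - 1).val < p ^ m := ZMod.val_lt _
    refine ⟨t, ?_, ?_⟩
    · rw [ht] at hlt
      have hm2 : p ^ m = p ^ a * p ^ b := by rw [← pow_add, hab]
      rw [hm2] at hlt
      exact Nat.lt_of_mul_lt_mul_left hlt
    · have hv : ((p ^ a * t : ℕ) : ZMod (p ^ m)) = v - 1 := by rw [← ht, cast_val_eq]
      rw [Nat.cast_add, Nat.cast_one, hv]; ring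
  · rintro ⟨t, ht, rfl⟩
    have hsub : ((1 + p ^ a * t : ℕ) : ZMod (p ^ m)) - 1 = ((p ^ a * t : ℕ) : ZMod (p ^ m)) := by
      push_cast; ring
    rw [hsub, ZMod.val_natCast]
    exact (Nat.dvd_mod_iff (pow_dvd_pow p (by omega))).mpr ⟨t, rfl⟩

private lemma sum_cong [NeZero (p ^ m)] (hp : p.Prime) {a b : ℕ} (hab : a + b = m)
    (f : ZMod (p ^ m) → ℂ) :
    ∑ v ∈ univ.filter (fun v : ZMod (p ^ m) => ((p ^ b : ℕ) : ZMod (p ^ m)) * (v - 1) = 0), f v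
      = ∑ t ∈ range (p ^ b), f ((1 + p ^ a * t : ℕ)) := by
  rw [filter_cong_eq hp hab, sum_image]
  have key : ∀ t₁ t₂ : ℕ, t₁ ≤ t₂ → t₂ < p ^ b →
      ((1 + p ^ a * t₁ : ℕ) : ZMod (p ^ m)) = ((1 + p ^ a * t₂ : ℕ) : ZMod (p ^ m)) → t₁ = t₂ := by
    intro t₁ t₂ hle hlt h
    have h' : ((p ^ a * t₁ : ℕ) : ZMod (p ^ m)) = ((p ^ a * t₂ : ℕ) : ZMod (p ^ m)) := by
      push_cast at h ⊢
      exact add_left_cancel h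
    rw [ZMod.natCast_eq_natCast_iff] at h'
    have hdvd := (Nat.modEq_iff_dvd' (Nat.mul_le_mul_left _ hle)).mp h'
    have hlt2 : p ^ a * t₂ - p ^ a * t₁ < p ^ m := by
      refine lt_of_le_of_lt (Nat.sub_le _ _) ?_
      have h3 : p ^ a * t₂ < p ^ a * p ^ b := by
        exact mul_lt_mul_of_pos_left hlt (pow_pos hp.pos a)
      rwa [← pow_add, hab] at h3
    have h0 := Nat.eq_zero_of_dvd_of_lt hdvd hlt2
    have h4 : p ^ a * t₂ ≤ p ^ a * t₁ := Nat.le_of_sub_eq_zero h0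
    have h5 : p ^ a * t₁ ≤ p ^ a * t₂ := Nat.mul_le_mul_left _ hle
    exact Nat.eq_of_mul_eq_mul_left (pow_pos hp.pos a) (le_antisymm h5 h4)
  intro t₁ h₁ t₂ h₂ h
  simp only [mem_coe, mem_range] at h₁ h₂
  rcases le_total t₁ t₂ with hle | hle
  · exact key t₁ t₂ hle h₂ h
  · exact (key t₂ t₁ hle h₁ h.symm).symm



variable {p m : ℕ}

private lemma sum_units_addChar [NeZero (p ^ m)] (hp : p.Prime) (hm : 1 ≤ m) (w : ZMod (p ^ m)) :
    ∑ u : (ZMod (p ^ m))ˣ, ZMod.stdAddChar ((u : ZMod (p ^ m)) * w)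
      = (if w = 0 then ((p ^ m : ℕ) : ℂ) else 0)
        - (if ((p : ℕ) : ZMod (p ^ m)) * w = 0 then ((p ^ (m - 1) : ℕ) : ℂ) else 0) := by
  have hsplit := Finset.sum_sdiff (f := fun y : ZMod (p ^ m) => ZMod.stdAddChar (y * w))
    (subset_univ (univ.image (fun u : (ZMod (p ^ m))ˣ => (u : ZMod (p ^ m)))))
  have himg : ∑ y ∈ univ.image (fun u : (ZMod (p ^ m))ˣ => (u : ZMod (p ^ m))),
      ZMod.stdAddChar (y * w) = ∑ u : (ZMod (p ^ m))ˣ, ZMod.stdAddChar ((u : ZMod (p ^ m)) * w) := by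
    apply Finset.sum_image
    intro x _ y _ h; exact Units.ext h
  have htot : ∑ y : ZMod (p ^ m), ZMod.stdAddChar (y * w)
      = if w = 0 then ((p ^ m : ℕ) : ℂ) else 0 := by
    rw [AddChar.sum_mulShift w (ZMod.isPrimitive_stdAddChar _)]
    simp [ZMod.card]
  have hnon : ∑ y ∈ univ \ univ.image (fun u : (ZMod (p ^ m))ˣ => (u : ZMod (p ^ m))),
      ZMod.stdAddChar (y * w)
      = if ((p : ℕ) : ZMod (p ^ m)) * w = 0 then ((p ^ (m - 1) : ℕ) : ℂ) else 0 := by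
    rw [sum_nonunits hp hm]
    have key : ∀ t : ℕ, ZMod.stdAddChar (((p * t : ℕ) : ZMod (p ^ m)) * w)
        = ZMod.stdAddChar (((p : ℕ) : ZMod (p ^ m)) * w) ^ t := by
      intro t
      have h1 : ((p * t : ℕ) : ZMod (p ^ m)) * w = t • (((p : ℕ) : ZMod (p ^ m)) * w) := by
        push_cast
        rw [nsmul_eq_mul]; ring
      rw [h1, AddChar.map_nsmul_eq_pow]
    simp_rw [key]
    have hζ : ZMod.stdAddChar (((p : ℕ) : ZMod (p ^ m)) * w) ^ (p ^ (m - 1)) = 1 := by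
      rw [← AddChar.map_nsmul_eq_pow, nsmul_eq_mul]
      have h2 : ((p ^ (m - 1) : ℕ) : ZMod (p ^ m)) * (((p : ℕ) : ZMod (p ^ m)) * w) = 0 := by
        rw [← mul_assoc, ← Nat.cast_mul, ← hpm hm, ZMod.natCast_self, zero_mul]
      rw [show ((p ^ (m - 1) : ℕ) : ZMod (p ^ m)) = ((p ^ (m - 1) : ℕ) : ZMod (p ^ m)) from rfl] at h2
      push_cast at h2 ⊢
      rw [h2, map_zero_eq_one]
    rw [geom_aux hζ]
    have hcond : (ZMod.stdAddChar (((p : ℕ) : ZMod (p ^ m)) * w) = 1)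
        ↔ (((p : ℕ) : ZMod (p ^ m)) * w = 0) := by
      constructor
      · intro h
        apply ZMod.injective_stdAddChar
        rw [h, map_zero_eq_one]
      · intro h; rw [h, map_zero_eq_one]
    rw [if_congr hcond rfl rfl]
  have hfin : ∑ u : (ZMod (p ^ m))ˣ, ZMod.stdAddChar ((u : ZMod (p ^ m)) * w)
      = (∑ y : ZMod (p ^ m), ZMod.stdAddChar (y * w))
        - ∑ y ∈ univ \ univ.image (fun u : (ZMod (p ^ m))ˣ => (u : ZMod (p ^ m))),
            ZMod.stdAddChar (y * w) := by
    rw [← himg, ← hsplit]; ring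
  rw [hfin, htot, hnon]

private lemma mul_conj_eval [NeZero (p ^ m)] (hp : p.Prime) (hm : 1 ≤ m)
    (χ : DirichletCharacter ℂ (p ^ m)) (b : ZMod (p ^ m)) :
    (∑ t : ZMod (p ^ m), χ t * ZMod.stdAddChar (t * b)) *
      (starRingEnd ℂ) (∑ t : ZMod (p ^ m), χ t * ZMod.stdAddChar (t * b))
    = ∑ v : ZMod (p ^ m), χ v *
        ((if b * (v - 1) = 0 then ((p ^ m : ℕ) : ℂ) else 0)
          - (if ((p : ℕ) : ZMod (p ^ m)) * (b * (v - 1)) = 0 then ((p ^ (m - 1) : ℕ) : ℂ) else 0)) := by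
  have hchar : 0 < ringChar (ZMod (p ^ m)) := by
    rw [ZMod.ringChar_zmod_n]; exact Nat.pos_of_ne_zero (NeZero.ne _)
  have hconj : ∀ t : ZMod (p ^ m), (starRingEnd ℂ) (χ t * ZMod.stdAddChar (t * b))
      = χ⁻¹ t * ZMod.stdAddChar (-(t * b)) := by
    intro t
    rw [map_mul]
    congr 1
    · exact MulChar.star_apply' χ t
    · rw [AddChar.starComp_apply hchar, AddChar.inv_apply]
  have expand : (∑ t : ZMod (p ^ m), χ t * ZMod.stdAddChar (t * b)) *
      (starRingEnd ℂ) (∑ t : ZMod (p ^ m), χ t * ZMod.stdAddChar (t * b))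
      = ∑ u : ZMod (p ^ m), (χ⁻¹ u * ZMod.stdAddChar (-(u * b))) *
          ∑ t : ZMod (p ^ m), χ t * ZMod.stdAddChar (t * b) := by
    rw [map_sum]
    simp_rw [hconj]
    rw [mul_comm, Finset.sum_mul]
  rw [expand]
  have hvanish : ∀ x ∈ (univ : Finset (ZMod (p ^ m))),
      x ∉ univ.image (fun u : (ZMod (p ^ m))ˣ => (u : ZMod (p ^ m))) →
      (χ⁻¹ x * ZMod.stdAddChar (-(x * b))) * ∑ t : ZMod (p ^ m), χ t * ZMod.stdAddChar (t * b) = 0 := by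
    intro x _ hx
    have hnu : ¬IsUnit x := by
      intro h
      exact hx (mem_image.mpr ⟨h.unit, mem_univ _, h.unit_spec⟩)
    rw [MulChar.map_nonunit _ hnu, zero_mul, zero_mul]
  rw [← Finset.sum_subset (subset_univ _) hvanish]
  rw [Finset.sum_image (by intro x _ y _ h; exact Units.ext h)]
  have step : ∀ u : (ZMod (p ^ m))ˣ,
      (χ⁻¹ (u : ZMod (p ^ m)) * ZMod.stdAddChar (-((u : ZMod (p ^ m)) * b))) *
        ∑ t : ZMod (p ^ m), χ t * ZMod.stdAddChar (t * b)
      = ∑ v : ZMod (p ^ m), χ v * ZMod.stdAddChar ((u : ZMod (p ^ m)) * (b * (v - 1))) := by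
    intro u
    have hreindex : (∑ t : ZMod (p ^ m), χ t * ZMod.stdAddChar (t * b))
        = ∑ v : ZMod (p ^ m), χ ((u : ZMod (p ^ m)) * v) *
            ZMod.stdAddChar (((u : ZMod (p ^ m)) * v) * b) := by
      exact (Fintype.sum_bijective (fun v => (u : ZMod (p ^ m)) * v)
        (Units.mulLeft_bijective u) _ _ (fun v => rfl)).symm
    rw [hreindex, Finset.mul_sum]
    refine Finset.sum_congr rfl fun v _ => ?_
    have h1 : χ ((u : ZMod (p ^ m)) * v) = χ (u : ZMod (p ^ m)) * χ v := map_mul χ _ _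
    have h2 : χ⁻¹ (u : ZMod (p ^ m)) * χ (u : ZMod (p ^ m)) = 1 := by
      rw [MulChar.inv_apply_eq_inv]
      exact Ring.inverse_mul_cancel _ (u.isUnit.map χ)
    have h3 : ZMod.stdAddChar (-((u : ZMod (p ^ m)) * b)) *
        ZMod.stdAddChar (((u : ZMod (p ^ m)) * v) * b)
        = ZMod.stdAddChar ((u : ZMod (p ^ m)) * (b * (v - 1))) := by
      rw [← map_add_eq_mul]
      congr 1
      ring
    calc (χ⁻¹ (u : ZMod (p ^ m)) * ZMod.stdAddChar (-((u : ZMod (p ^ m)) * b))) *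
        (χ ((u : ZMod (p ^ m)) * v) * ZMod.stdAddChar (((u : ZMod (p ^ m)) * v) * b))
        = (χ⁻¹ (u : ZMod (p ^ m)) * χ (u : ZMod (p ^ m))) * χ v *
            (ZMod.stdAddChar (-((u : ZMod (p ^ m)) * b)) *
              ZMod.stdAddChar (((u : ZMod (p ^ m)) * v) * b)) := by rw [h1]; ring
      _ = χ v * ZMod.stdAddChar ((u : ZMod (p ^ m)) * (b * (v - 1))) := by
          rw [h2, h3, one_mul]
  simp_rw [step]
  rw [Finset.sum_comm]
  refine Finset.sum_congr rfl fun v _ => ?_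
  rw [← Finset.mul_sum, sum_units_addChar hp hm (b * (v - 1))]

private lemma sum_res_zero [NeZero (p ^ m)] (hp : p.Prime) (hm : 1 ≤ m)
    (χ : DirichletCharacter ℂ (p ^ m)) (hχ : χ.IsPrimitive) :
    ∑ v ∈ univ.filter
      (fun v : ZMod (p ^ m) => ((p ^ 1 : ℕ) : ZMod (p ^ m)) * (v - 1) = 0), χ v = 0 := by
  by_cases hm2 : 2 ≤ m
  · rw [sum_cong hp (a := m - 1) (b := 1) (by omega)]
    have hc2 : (((p ^ (m - 1) : ℕ) : ZMod (p ^ m))) ^ 2 = 0 := by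
      rw [← Nat.cast_pow, ZMod.natCast_eq_zero_iff, ← pow_mul]
      exact pow_dvd_pow p (by omega)
    have hval : ∀ t : ℕ, ((1 + p ^ (m - 1) * t : ℕ) : ZMod (p ^ m))
        = (1 + ((p ^ (m - 1) : ℕ) : ZMod (p ^ m))) ^ t := by
      intro t; rw [pow_one_add hc2]; push_cast; ring
    simp_rw [hval, map_pow]
    have hζp : (χ (1 + ((p ^ (m - 1) : ℕ) : ZMod (p ^ m)))) ^ (p ^ 1) = 1 := by
      rw [← map_pow, pow_one, pow_one_add hc2]
      have h2 : ((p : ℕ) : ZMod (p ^ m)) * ((p ^ (m - 1) : ℕ) : ZMod (p ^ m)) = 0 := by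
        rw [← Nat.cast_mul, mul_comm, ← hpm hm, ZMod.natCast_self]
      rw [h2, add_zero, map_one]
    rw [geom_aux hζp, if_neg]
    intro hone
    have hdvd : p ^ (m - 1) ∣ p ^ m := pow_dvd_pow p (by omega)
    have hft : χ.FactorsThrough (p ^ (m - 1)) := by
      rw [factorsThrough_iff_ker_unitsMap hdvd]
      intro u hu
      rw [MonoidHom.mem_ker] at hu
      have hcast : ((p ^ 1 : ℕ) : ZMod (p ^ m)) * (((u : (ZMod (p ^ m))ˣ) : ZMod (p ^ m)) - 1) = 0 := by
        rw [cast_mul_eq_zero_iff hp (a := m - 1) (b := 1) (by omega)]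
        have h3 : (ZMod.castHom hdvd (ZMod (p ^ (m - 1))))
            (((u : (ZMod (p ^ m))ˣ) : ZMod (p ^ m)) - 1) = 0 := by
          rw [map_sub, map_one]
          have h4 : (ZMod.castHom hdvd (ZMod (p ^ (m - 1))))
              ((u : (ZMod (p ^ m))ˣ) : ZMod (p ^ m))
              = ((ZMod.unitsMap hdvd u : (ZMod (p ^ (m - 1)))ˣ) : ZMod (p ^ (m - 1))) := rfl
          rw [h4, hu, Units.val_one, sub_self]
        rwa [ZMod.castHom_apply, ← ZMod.natCast_val, ZMod.natCast_eq_zero_iff] at h3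
      have hmem : ((u : (ZMod (p ^ m))ˣ) : ZMod (p ^ m)) ∈
          (range (p ^ 1)).image (fun t => ((1 + p ^ (m - 1) * t : ℕ) : ZMod (p ^ m))) := by
        rw [← filter_cong_eq hp (by omega : (m - 1) + 1 = m)]
        simp only [mem_filter, mem_univ, true_and]
        exact hcast
      obtain ⟨t, _, ht⟩ := mem_image.mp hmem
      have hval1 : χ ((u : (ZMod (p ^ m))ˣ) : ZMod (p ^ m)) = 1 := by
        rw [← ht, hval, map_pow, hone, one_pow]
      rw [MonoidHom.mem_ker]
      apply Units.ext
      rw [MulChar.coe_toUnitHom, hval1, Units.val_one]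
    have hle : χ.conductor ≤ p ^ (m - 1) := Nat.sInf_le hft
    rw [show χ.conductor = p ^ m from hχ] at hle
    exact absurd hle (not_le.mpr (Nat.pow_lt_pow_right hp.one_lt (by omega)))
  · have hm1 : m = 1 := by omega
    subst hm1
    have hall : ∀ v ∈ (univ : Finset (ZMod (p ^ 1))),
        ((p ^ 1 : ℕ) : ZMod (p ^ 1)) * (v - 1) = 0 := by
      intro v _; rw [ZMod.natCast_self, zero_mul]
    rw [Finset.filter_true_of_mem hall]
    apply MulChar.sum_eq_zero_of_ne_one
    intro h1
    rw [h1] at hχ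
    have h2 := DirichletCharacter.conductor_one (R := ℂ) (n := p ^ 1)
    rw [show DirichletCharacter.conductor (1 : DirichletCharacter ℂ (p ^ 1)) = p ^ 1 from hχ] at h2
    exact hp.ne_one (by simpa using h2)

private lemma gauss_norm [NeZero (p ^ m)] (hp : p.Prime) (hm : 1 ≤ m)
    (χ : DirichletCharacter ℂ (p ^ m)) (hχ : χ.IsPrimitive) :
    gaussSum χ ZMod.stdAddChar * (starRingEnd ℂ) (gaussSum χ ZMod.stdAddChar)
      = ((p ^ m : ℕ) : ℂ) := by
  have hgs : gaussSum χ ZMod.stdAddChar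
      = ∑ t : ZMod (p ^ m), χ t * ZMod.stdAddChar (t * 1) := by
    rw [gaussSum]
    refine Finset.sum_congr rfl fun t _ => by rw [mul_one]
  rw [hgs, mul_conj_eval hp hm χ 1]
  simp only [one_mul]
  rw [Finset.sum_congr rfl (fun v _ => mul_sub (χ v)
    (if v - 1 = 0 then ((p ^ m : ℕ) : ℂ) else 0)
    (if ((p : ℕ) : ZMod (p ^ m)) * (v - 1) = 0 then ((p ^ (m - 1) : ℕ) : ℂ) else 0))]
  rw [Finset.sum_sub_distrib]
  have first : ∑ v : ZMod (p ^ m), χ v * (if v - 1 = 0 then ((p ^ m : ℕ) : ℂ) else 0)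
      = ((p ^ m : ℕ) : ℂ) := by
    simp only [sub_eq_zero, mul_ite, mul_zero]
    rw [Finset.sum_ite_eq' univ (1 : ZMod (p ^ m)) (fun v => χ v * ((p ^ m : ℕ) : ℂ))]
    simp
  have second : ∑ v : ZMod (p ^ m),
      χ v * (if ((p : ℕ) : ZMod (p ^ m)) * (v - 1) = 0 then ((p ^ (m - 1) : ℕ) : ℂ) else 0)
      = 0 := by
    simp only [mul_ite, mul_zero]
    rw [← Finset.sum_filter]
    have hpow : ((p : ℕ) : ZMod (p ^ m)) = ((p ^ 1 : ℕ) : ZMod (p ^ m)) := by norm_num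
    simp_rw [hpow]
    rw [← Finset.sum_mul, sum_res_zero hp hm χ hχ, zero_mul]
  rw [first, second, sub_zero]

private lemma unit_one_add (hp : p.Prime) (hm : 1 ≤ m) [NeZero (p ^ m)]
    (ψ : DirichletCharacter ℂ p) (hdvd : p ∣ p ^ m) (t : ℕ) :
    ((changeLevel hdvd ψ)⁻¹) ((1 + p * t : ℕ) : ZMod (p ^ m)) = 1 := by
  have hcop : Nat.Coprime (1 + p * t) (p ^ m) := by
    apply Nat.Coprime.pow_right
    have hnd : ¬ p ∣ (1 + p * t) := by
      intro hd
      rw [add_comm] at hd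
      have := (Nat.dvd_add_right ⟨t, rfl⟩).mp hd
      exact hp.ne_one (Nat.dvd_one.mp this)
    exact ((Nat.Prime.coprime_iff_not_dvd hp).mpr hnd).symm
  have hu : IsUnit ((1 + p * t : ℕ) : ZMod (p ^ m)) := (ZMod.isUnit_iff_coprime _ _).mpr hcop
  have hchg : (changeLevel hdvd ψ)⁻¹ = changeLevel hdvd ψ⁻¹ := (map_inv (changeLevel hdvd) ψ).symm
  rw [hchg]
  have heval := changeLevel_eq_cast_of_dvd ψ⁻¹ hdvd hu.unit
  rw [hu.unit_spec] at heval
  rw [heval]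
  have hcast : (ZMod.cast (((1 + p * t : ℕ) : ZMod (p ^ m))) : ZMod p) = ((1 + p * t : ℕ) : ZMod p) :=
    ZMod.cast_natCast hdvd _
  rw [hcast]
  have : ((1 + p * t : ℕ) : ZMod p) = 1 := by
    push_cast [ZMod.natCast_self]
    ring
  rw [this, map_one]

open scoped Classical in
private lemma G_eval [NeZero (p ^ m)] (hp : p.Prime) (hm : 1 ≤ m)
    (ψ : DirichletCharacter ℂ p) (hdvd : p ∣ p ^ m) :
    (∑ t : ZMod (p ^ m), ((changeLevel hdvd ψ)⁻¹) t *
        ZMod.stdAddChar (t * (-((p ^ (m - 1) : ℕ) : ZMod (p ^ m))))) *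
      (starRingEnd ℂ) (∑ t : ZMod (p ^ m), ((changeLevel hdvd ψ)⁻¹) t *
        ZMod.stdAddChar (t * (-((p ^ (m - 1) : ℕ) : ZMod (p ^ m)))))
    = if ψ = 1 then ((p ^ (2 * (m - 1)) : ℕ) : ℂ) else ((p ^ (2 * m - 1) : ℕ) : ℂ) := by
  set χt := (changeLevel hdvd ψ)⁻¹ with hχt
  set c : ZMod (p ^ m) := ((p ^ (m - 1) : ℕ) : ZMod (p ^ m)) with hcdef
  rw [mul_conj_eval hp hm χt (-c)]
  have hsecond : ∀ v : ZMod (p ^ m), ((p : ℕ) : ZMod (p ^ m)) * ((-c) * (v - 1)) = 0 := by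
    intro v
    have hpc : ((p : ℕ) : ZMod (p ^ m)) * c = 0 := by
      rw [hcdef, ← Nat.cast_mul, mul_comm, ← hpm hm, ZMod.natCast_self]
    have h2 : ((p : ℕ) : ZMod (p ^ m)) * ((-c) * (v - 1))
        = (((p : ℕ) : ZMod (p ^ m)) * c) * (-(v - 1)) := by ring
    rw [h2, hpc, zero_mul]
  have hfirst : ∀ v : ZMod (p ^ m), ((-c) * (v - 1) = 0) ↔ (c * (v - 1) = 0) := by
    intro v; rw [neg_mul, neg_eq_zero]
  have hterm : ∀ v : ZMod (p ^ m),
      χt v * ((if (-c) * (v - 1) = 0 then ((p ^ m : ℕ) : ℂ) else 0)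
        - (if ((p : ℕ) : ZMod (p ^ m)) * ((-c) * (v - 1)) = 0 then ((p ^ (m - 1) : ℕ) : ℂ) else 0))
      = χt v * (if c * (v - 1) = 0 then ((p ^ m : ℕ) : ℂ) else 0)
        - χt v * ((p ^ (m - 1) : ℕ) : ℂ) := by
    intro v
    rw [if_congr (hfirst v) rfl rfl, if_pos (hsecond v), mul_sub]
  rw [Finset.sum_congr rfl (fun v _ => hterm v), Finset.sum_sub_distrib]
  have hA : ∑ v : ZMod (p ^ m), χt v * (if c * (v - 1) = 0 then ((p ^ m : ℕ) : ℂ) else 0)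
      = ((p ^ (m - 1) : ℕ) : ℂ) * ((p ^ m : ℕ) : ℂ) := by
    simp only [mul_ite, mul_zero]
    rw [← Finset.sum_filter]
    have hcpow : c = ((p ^ (m - 1) : ℕ) : ZMod (p ^ m)) := hcdef
    simp_rw [hcpow]
    rw [sum_cong hp (a := 1) (b := m - 1) (by omega)]
    have hone : ∀ t ∈ range (p ^ (m - 1)),
        χt (((1 + p ^ 1 * t : ℕ) : ZMod (p ^ m))) * ((p ^ m : ℕ) : ℂ) = ((p ^ m : ℕ) : ℂ) := by
      intro t _
      rw [show (1 + p ^ 1 * t : ℕ) = 1 + p * t by ring, unit_one_add hp hm ψ hdvd t, one_mul]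
    rw [Finset.sum_congr rfl hone, Finset.sum_const, card_range, nsmul_eq_mul]
  have hB : ∑ v : ZMod (p ^ m), χt v * ((p ^ (m - 1) : ℕ) : ℂ)
      = (if ψ = 1 then ((p ^ (m - 1) * (p - 1) : ℕ) : ℂ) else 0) * ((p ^ (m - 1) : ℕ) : ℂ) := by
    rw [← Finset.sum_mul]
    congr 1
    by_cases hψ : ψ = 1
    · rw [if_pos hψ]
      have : χt = 1 := by rw [hχt, hψ, map_one, inv_one]
      rw [this]
      have hcard := MulChar.sum_one_eq_card_units (R := ZMod (p ^ m)) (R' := ℂ)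
      rw [hcard, ZMod.card_units_eq_totient, Nat.totient_prime_pow hp (by omega)]
    · rw [if_neg hψ]
      apply MulChar.sum_eq_zero_of_ne_one
      intro h1
      rw [hχt, inv_eq_one] at h1
      exact hψ ((changeLevel_eq_one_iff hdvd).mp h1)
  rw [hA, hB]
  by_cases hψ : ψ = 1
  · rw [if_pos hψ, if_pos hψ]
    have hpm1 : ((p ^ m : ℕ) : ℂ) = ((p ^ (m - 1) : ℕ) : ℂ) * (p : ℂ) := by
      rw [hpm hm]; push_cast; ring
    have hp1 : ((p - 1 : ℕ) : ℂ) = (p : ℂ) - 1 := by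
      rw [Nat.cast_sub hp.one_le, Nat.cast_one]
    have h2m : ((p ^ (2 * (m - 1)) : ℕ) : ℂ) = ((p ^ (m - 1) : ℕ) : ℂ) * ((p ^ (m - 1) : ℕ) : ℂ) := by
      rw [← Nat.cast_mul, ← pow_add]
      congr 2
      omega
    rw [hpm1, h2m]
    push_cast [hp1]
    ring
  · rw [if_neg hψ, if_neg hψ, zero_mul, sub_zero, ← Nat.cast_mul, ← pow_add]
    congr 2
    omega

private lemma jsum_eq [NeZero (p ^ m)] (hp : p.Prime) (hm : 1 ≤ m) {k : ℕ}
    (χ : Fin (k + 1) → DirichletCharacter ℂ (p ^ m))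
    (hprim : ∀ i, (χ i).IsPrimitive) :
    Jsum χ ((p ^ (m - 1) : ℕ) : ZMod (p ^ m))
      = ((p ^ m : ℕ) : ℂ)⁻¹ * ((∏ i, gaussSum (χ i) ZMod.stdAddChar) *
          ∑ t : ZMod (p ^ m), ((∏ i, χ i)⁻¹) t *
            ZMod.stdAddChar (t * (-((p ^ (m - 1) : ℕ) : ZMod (p ^ m))))) := by
  set B : ZMod (p ^ m) := ((p ^ (m - 1) : ℕ) : ZMod (p ^ m)) with hB
  have hN : ((p ^ m : ℕ) : ℂ) ≠ 0 := Nat.cast_ne_zero.mpr (NeZero.ne _)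
  have hind : ∀ c : ZMod (p ^ m), (if c = B then (1 : ℂ) else 0)
      = ((p ^ m : ℕ) : ℂ)⁻¹ * ∑ t : ZMod (p ^ m), ZMod.stdAddChar (t * (c - B)) := by
    intro c
    rw [AddChar.sum_mulShift _ (ZMod.isPrimitive_stdAddChar _), ZMod.card]
    by_cases h : c = B
    · rw [if_pos h, if_pos (by rw [h, sub_self]), inv_mul_cancel₀ hN]
    · rw [if_neg h, if_neg (fun hc => h (sub_eq_zero.mp hc))]
      simp
  have step1 : Jsum χ B = ∑ x : Fin (k + 1) → ZMod (p ^ m),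
      (∏ i, χ i (x i)) * (((p ^ m : ℕ) : ℂ)⁻¹ *
        ∑ t : ZMod (p ^ m), ZMod.stdAddChar (t * ((∑ i, x i) - B))) := by
    rw [Jsum]
    refine Finset.sum_congr rfl fun x _ => ?_
    rw [← hind]
    by_cases h : (∑ i, x i) = B
    · rw [if_pos h, if_pos h, mul_one]
    · rw [if_neg h, if_neg h, mul_zero]
  rw [step1]
  have step2 : ∀ x : Fin (k + 1) → ZMod (p ^ m),
      (∏ i, χ i (x i)) * (((p ^ m : ℕ) : ℂ)⁻¹ *
        ∑ t : ZMod (p ^ m), ZMod.stdAddChar (t * ((∑ i, x i) - B)))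
      = ((p ^ m : ℕ) : ℂ)⁻¹ * ∑ t : ZMod (p ^ m),
          (∏ i, (χ i (x i) * ZMod.stdAddChar (t * x i))) * ZMod.stdAddChar (t * (-B)) := by
    intro x
    rw [mul_left_comm]
    congr 1
    rw [Finset.mul_sum]
    refine Finset.sum_congr rfl fun t _ => ?_
    rw [Finset.prod_mul_distrib]
    have hsplit : ZMod.stdAddChar (t * ((∑ i, x i) - B))
        = (∏ i, ZMod.stdAddChar (t * x i)) * ZMod.stdAddChar (t * (-B)) := by
      rw [← map_sum_eq_prod, ← map_add_eq_mul]
      congr 1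
      rw [← Finset.mul_sum]
      ring
    rw [hsplit]
    ring
  rw [Finset.sum_congr rfl (fun x _ => step2 x), ← Finset.mul_sum]
  congr 1
  rw [Finset.sum_comm]
  simp_rw [← Finset.sum_mul]
  have hfact : ∀ t : ZMod (p ^ m),
      (∑ x : Fin (k + 1) → ZMod (p ^ m), ∏ i, (χ i (x i) * ZMod.stdAddChar (t * x i)))
      = ∏ i, gaussSum (χ i) ((ZMod.stdAddChar).mulShift t) := by
    intro t
    have hpi := Finset.prod_univ_sum (fun _ : Fin (k + 1) => (univ : Finset (ZMod (p ^ m))))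
      (fun i a => χ i a * ZMod.stdAddChar (t * a))
    rw [Fintype.piFinset_univ] at hpi
    rw [← hpi]
    refine Finset.prod_congr rfl fun i _ => ?_
    rw [gaussSum]
    refine Finset.sum_congr rfl fun a _ => ?_
    rw [AddChar.mulShift_apply]
  simp_rw [hfact]
  have hgs : ∀ t : ZMod (p ^ m), ∀ i, gaussSum (χ i) ((ZMod.stdAddChar).mulShift t)
      = (χ i)⁻¹ t * gaussSum (χ i) ZMod.stdAddChar :=
    fun t i => gaussSum_mulShift_of_isPrimitive _ (hprim i) t
  simp_rw [hgs]
  have hsplitprod : ∀ t : ZMod (p ^ m),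
      (∏ i, ((χ i)⁻¹ t * gaussSum (χ i) ZMod.stdAddChar))
      = ((∏ i, χ i)⁻¹) t * ∏ i, gaussSum (χ i) ZMod.stdAddChar := by
    intro t
    rw [Finset.prod_mul_distrib]
    congr 1
    rw [← mulchar_prod_apply univ univ_nonempty (fun i => (χ i)⁻¹) t]
    congr 1
    rw [← Finset.prod_inv_distrib]
  simp_rw [hsplitprod]
  rw [Finset.mul_sum]
  exact Finset.sum_congr rfl fun t _ => by ring

end Stmt16Aux

/-- Here the `k+1 ≥ 1` characters are `χ 0, …, χ (Fin.last k)`, all primitive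
mod `p^m`, whose product is induced by a character `ψ` mod `p`. -/
theorem stmt16 {p m k : ℕ} [NeZero (p ^ m)]
    (hp : p.Prime) (hm : 1 ≤ m)
    (χ : Fin (k + 1) → DirichletCharacter ℂ (p ^ m))
    (hprim : ∀ i, (χ i).IsPrimitive)
    (ψ : DirichletCharacter ℂ p)
    (hind : ∏ i, χ i = DirichletCharacter.changeLevel
      (dvd_pow_self p (Nat.one_le_iff_ne_zero.mp hm)) ψ) :
    (ψ = 1 →
      ‖Jsum χ ((p ^ (m - 1) : ℕ) : ZMod (p ^ m))‖ =
        (Real.sqrt p) ^ (m * (k + 1)) / p) ∧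
    (ψ ≠ 1 →
      ‖Jsum χ ((p ^ (m - 1) : ℕ) : ZMod (p ^ m))‖ =
        (Real.sqrt p) ^ (m * (k + 1) - 1)) := by
  have hJ := Stmt16Aux.jsum_eq hp hm χ hprim
  rw [hind] at hJ
  have hG := Stmt16Aux.G_eval hp hm ψ (dvd_pow_self p (Nat.one_le_iff_ne_zero.mp hm))
  set s : ℝ := Real.sqrt p with hs
  have hp0 : (0 : ℝ) < (p : ℝ) := by exact_mod_cast hp.pos
  have hs2 : s ^ 2 = (p : ℝ) := Real.sq_sqrt hp0.le
  have hs0 : 0 < s := Real.sqrt_pos.mpr hp0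
  have hsne : s ≠ 0 := ne_of_gt hs0
  have habsτ : ∀ i, ‖gaussSum (χ i) ZMod.stdAddChar‖ = s ^ m := by
    intro i
    have h := Stmt16Aux.gauss_norm hp hm (χ i) (hprim i)
    rw [Complex.mul_conj] at h
    have h2 : Complex.normSq (gaussSum (χ i) ZMod.stdAddChar) = ((p ^ m : ℕ) : ℝ) := by
      exact_mod_cast h
    rw [Complex.norm_def, h2]
    push_cast
    exact Stmt16Aux.sqrt_pow_nat hp0.le m
  have habsJ : ‖Jsum χ ((p ^ (m - 1) : ℕ) : ZMod (p ^ m))‖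
      = (s ^ (2 * m))⁻¹ * (s ^ (m * (k + 1)) *
          ‖∑ t : ZMod (p ^ m),
            ((DirichletCharacter.changeLevel
              (dvd_pow_self p (Nat.one_le_iff_ne_zero.mp hm)) ψ)⁻¹) t *
              ZMod.stdAddChar (t * (-((p ^ (m - 1) : ℕ) : ZMod (p ^ m))))‖) := by
    rw [hJ, norm_mul, norm_mul, norm_inv, Complex.norm_natCast, norm_prod]
    simp_rw [habsτ]
    rw [Finset.prod_const, Finset.card_univ, Fintype.card_fin]
    have hcast : ((p ^ m : ℕ) : ℝ) = s ^ (2 * m) := by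
      push_cast
      rw [pow_mul, hs2]
    rw [hcast, ← pow_mul s m (k + 1)]
  constructor
  · intro hψ
    rw [if_pos hψ] at hG
    have habsG : ‖∑ t : ZMod (p ^ m),
        ((DirichletCharacter.changeLevel
          (dvd_pow_self p (Nat.one_le_iff_ne_zero.mp hm)) ψ)⁻¹) t *
          ZMod.stdAddChar (t * (-((p ^ (m - 1) : ℕ) : ZMod (p ^ m))))‖
        = s ^ (2 * (m - 1)) := by
      rw [Complex.mul_conj] at hG
      norm_cast at hG
      rw [Complex.norm_def, hG]
      push_cast
      exact Stmt16Aux.sqrt_pow_nat hp0.le _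
    rw [habsJ, habsG, ← hs2]
    rw [inv_mul_eq_div, div_eq_div_iff (pow_ne_zero _ hsne) (pow_ne_zero 2 hsne)]
    rw [← pow_add, ← pow_add, ← pow_add]
    congr 1
    omega
  · intro hψ
    rw [if_neg hψ] at hG
    have habsG : ‖∑ t : ZMod (p ^ m),
        ((DirichletCharacter.changeLevel
          (dvd_pow_self p (Nat.one_le_iff_ne_zero.mp hm)) ψ)⁻¹) t *
          ZMod.stdAddChar (t * (-((p ^ (m - 1) : ℕ) : ZMod (p ^ m))))‖
        = s ^ (2 * m - 1) := by
      rw [Complex.mul_conj] at hG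
      norm_cast at hG
      rw [Complex.norm_def, hG]
      push_cast
      exact Stmt16Aux.sqrt_pow_nat hp0.le _
    rw [habsJ, habsG]
    rw [inv_mul_eq_div, div_eq_iff (pow_ne_zero _ hsne)]
    rw [← pow_add, ← pow_add]
    congr 1
    have hmk : 1 ≤ m * (k + 1) := Nat.mul_pos hm (Nat.succ_pos k)
    omega
end
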